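/- Let (V, e) be an order unit space and let u, v be peripheral elements (i.e., u, v ∈ V⁺ with ‖u‖ = ‖e−u‖ = ‖v‖ = ‖e−v‖ = 1 and e−u, e−v ∈ V⁺) with u ≠ v. Then the following are equivalent: (1) some point strictly between u and v is peripheral; (2) there exist states f, g of V with f(u) = f(v) = 1 and g(u) = g(v) = 0; (3) the entire segment [u, v] consists of peripheral elements. -/

import Mathlib

open Set

/-- `C` is the positive cone of an order unit space structure on `V` with order unit `e`:
a proper, Archimedean cone for which `e` is an order unit. -/
structure IsOrderUnitSpace {V : Type*} [AddCommGroup V] [Module ℝ V]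
    (C : Set V) (e : V) : Prop where
  zero_mem : (0 : V) ∈ C
  add_mem : ∀ u ∈ C, ∀ v ∈ C, u + v ∈ C
  smul_mem : ∀ r : ℝ, 0 ≤ r → ∀ v ∈ C, r • v ∈ C
  proper : ∀ v ∈ C, -v ∈ C → v = 0
  arch : ∀ v : V, (∀ ε : ℝ, 0 < ε → ε • e + v ∈ C) → v ∈ C
  unit : ∀ v : V, ∃ a : ℝ, 0 < a ∧ a • e - v ∈ C ∧ a • e + v ∈ C

/-- The order unit norm `‖v‖ = inf {a > 0 : a • e ± v ∈ C}`. -/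
noncomputable def ouNorm {V : Type*} [AddCommGroup V] [Module ℝ V]
    (C : Set V) (e : V) (v : V) : ℝ :=
  sInf {a : ℝ | 0 < a ∧ a • e - v ∈ C ∧ a • e + v ∈ C}

/-- A state: a positive linear functional sending `e` to `1`. -/
def IsState {V : Type*} [AddCommGroup V] [Module ℝ V]
    (C : Set V) (e : V) (f : V →ₗ[ℝ] ℝ) : Prop :=
  (∀ v ∈ C, 0 ≤ f v) ∧ f e = 1

/-- `∞`-orthogonality with respect to the order unit norm. -/
def PerpInf {V : Type*} [AddCommGroup V] [Module ℝ V]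
    (C : Set V) (e : V) (x y : V) : Prop :=
  ∀ k : ℝ, ouNorm C e (x + k • y) = max (ouNorm C e x) (ouNorm C e (k • y))

/-- A peripheral element of an order unit space. -/
def Peripheral {V : Type*} [AddCommGroup V] [Module ℝ V]
    (C : Set V) (e : V) (u : V) : Prop :=
  u ∈ C ∧ e - u ∈ C ∧ ouNorm C e u = 1 ∧ ouNorm C e (e - u) = 1

namespace PeriphAux

variable {V : Type*} [AddCommGroup V] [Module ℝ V] {C : Set V} {e : V}

noncomputable def p (C : Set V) (e : V) (v : V) : ℝ := sInf {a : ℝ | a • e - v ∈ C}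

theorem e_mem (h : IsOrderUnitSpace C e) : e ∈ C := by
  obtain ⟨a, ha, -, h2⟩ := h.unit e
  have h3 : (a + 1) • e ∈ C := by rwa [add_smul, one_smul]
  have h4 := h.smul_mem (a + 1)⁻¹ (by positivity) _ h3
  rwa [inv_smul_smul₀ (by positivity)] at h4

theorem smul_e_nonneg (h : IsOrderUnitSpace C e) (he : e ≠ 0) {c : ℝ}
    (hc : c • e ∈ C) : 0 ≤ c := by
  by_contra hlt
  push_neg at hlt
  have h1 : -(c • e) ∈ C := by
    rw [← neg_smul]; exact h.smul_mem (-c) (by linarith) e (e_mem h)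
  have h2 := h.proper _ hc h1
  rcases smul_eq_zero.mp h2 with h3 | h3
  · linarith
  · exact he h3

theorem pSet_nonempty (h : IsOrderUnitSpace C e) (v : V) :
    Set.Nonempty {a : ℝ | a • e - v ∈ C} := by
  obtain ⟨a, -, h1, -⟩ := h.unit v
  exact ⟨a, h1⟩

theorem pSet_bddBelow (h : IsOrderUnitSpace C e) (he : e ≠ 0) (v : V) :
    BddBelow {a : ℝ | a • e - v ∈ C} := by
  obtain ⟨b, -, -, h2⟩ := h.unit v
  refine ⟨-b, fun a ha => ?_⟩
  have h3 : (a + b) • e ∈ C := by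
    have := h.add_mem _ ha _ h2
    rwa [show a • e - v + (b • e + v) = (a + b) • e by module] at this
  have := smul_e_nonneg h he h3
  linarith

theorem p_le (h : IsOrderUnitSpace C e) (he : e ≠ 0) {v : V} {a : ℝ}
    (ha : a • e - v ∈ C) : p C e v ≤ a :=
  csInf_le (pSet_bddBelow h he v) ha

theorem p_spec (h : IsOrderUnitSpace C e) (he : e ≠ 0) (v : V) :
    p C e v • e - v ∈ C := by
  apply h.arch
  intro ε hε
  have hlt : sInf {a : ℝ | a • e - v ∈ C} < p C e v + ε := by
    simp only [p]; linarith
  obtain ⟨a, ha, halt⟩ := exists_lt_of_csInf_lt (pSet_nonempty h v) hlt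
  have h1 : (p C e v + ε - a) • e ∈ C := h.smul_mem _ (by linarith) _ (e_mem h)
  have := h.add_mem _ h1 _ ha
  rwa [show (p C e v + ε - a) • e + (a • e - v) = ε • e + (p C e v • e - v) by module]
    at this

theorem p_add (h : IsOrderUnitSpace C e) (he : e ≠ 0) (x y : V) :
    p C e (x + y) ≤ p C e x + p C e y := by
  apply p_le h he
  have := h.add_mem _ (p_spec h he x) _ (p_spec h he y)
  rwa [show p C e x • e - x + (p C e y • e - y) = (p C e x + p C e y) • e - (x + y)
    by module] at this

theorem p_smul (h : IsOrderUnitSpace C e) (he : e ≠ 0) {c : ℝ} (hc : 0 < c) (x : V) :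
    p C e (c • x) = c * p C e x := by
  apply le_antisymm
  · apply p_le h he
    have := h.smul_mem c hc.le _ (p_spec h he x)
    rwa [show c • (p C e x • e - x) = (c * p C e x) • e - c • x by
      rw [smul_sub, smul_smul]] at this
  · have h1 : p C e x ≤ c⁻¹ * p C e (c • x) := by
      apply p_le h he
      have := h.smul_mem c⁻¹ (by positivity) _ (p_spec h he (c • x))
      rwa [show c⁻¹ • (p C e (c • x) • e - c • x) = (c⁻¹ * p C e (c • x)) • e - x by
        rw [smul_sub, smul_smul, smul_smul, inv_mul_cancel₀ hc.ne', one_smul]] at this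
    calc c * p C e x ≤ c * (c⁻¹ * p C e (c • x)) :=
          mul_le_mul_of_nonneg_left h1 hc.le
      _ = p C e (c • x) := by field_simp

theorem p_sub_e (h : IsOrderUnitSpace C e) (he : e ≠ 0) (x : V) :
    p C e (x - e) = p C e x - 1 := by
  apply le_antisymm
  · apply p_le h he
    rw [show (p C e x - 1) • e - (x - e) = p C e x • e - x by module]
    exact p_spec h he x
  · have h1 : p C e x ≤ p C e (x - e) + 1 := by
      apply p_le h he
      rw [show (p C e (x - e) + 1) • e - x = p C e (x - e) • e - (x - e) by module]
      exact p_spec h he (x - e)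
    linarith

theorem p_zero (h : IsOrderUnitSpace C e) (he : e ≠ 0) : p C e (0 : V) = 0 := by
  apply le_antisymm
  · apply p_le h he; simpa using h.zero_mem
  · refine le_csInf (pSet_nonempty h 0) fun a ha => ?_
    apply smul_e_nonneg h he
    simpa using ha

theorem p_e (h : IsOrderUnitSpace C e) (he : e ≠ 0) : p C e e = 1 := by
  have := p_sub_e h he e
  rw [sub_self, p_zero h he] at this
  linarith

theorem p_neg_e (h : IsOrderUnitSpace C e) (he : e ≠ 0) : p C e (-e) = -1 := by
  have := p_sub_e h he 0
  rw [zero_sub, p_zero h he] at this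
  linarith

theorem exists_state (h : IsOrderUnitSpace C e) (he : e ≠ 0) {w : V}
    (hw : p C e w = 1) : ∃ f : V →ₗ[ℝ] ℝ, IsState C e f ∧ f w = 1 := by
  have hwe : p C e (w - e) = 0 := by rw [p_sub_e h he, hw]; ring
  have hew : 0 ≤ p C e (e - w) := by
    have h1 := p_add h he (e - w) (w - e)
    rw [show e - w + (w - e) = 0 by abel, p_zero h he, hwe] at h1
    linarith
  set f0 : V →ₗ.[ℝ] ℝ := ⟨Submodule.span ℝ {w - e}, 0⟩ with hf0
  have hdom : ∀ x : f0.domain, f0 x ≤ p C e x := by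
    rintro ⟨x, hx⟩
    obtain ⟨c, rfl⟩ := Submodule.mem_span_singleton.mp hx
    have hval : f0 ⟨c • (w - e), hx⟩ = 0 := rfl
    rw [hval]
    show 0 ≤ p C e (c • (w - e))
    rcases lt_trichotomy c 0 with hc | hc | hc
    · have : c • (w - e) = (-c) • (e - w) := by module
      rw [this, p_smul h he (by linarith : (0:ℝ) < -c)]
      exact mul_nonneg (by linarith) hew
    · subst hc; simp [p_zero h he]
    · rw [p_smul h he hc, hwe]; simp
  obtain ⟨g, hg_ext, hg_le⟩ := exists_extension_of_le_sublinear f0 (p C e)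
    (fun c hc x => p_smul h he hc x) (p_add h he) hdom
  have hge : g e = 1 := by
    have h1 : g e ≤ 1 := by have := hg_le e; rwa [p_e h he] at this
    have h2 : g (-e) ≤ -1 := by have := hg_le (-e); rwa [p_neg_e h he] at this
    rw [map_neg] at h2
    linarith
  have hgwe : g (w - e) = 0 := by
    have := hg_ext ⟨w - e, Submodule.mem_span_singleton_self _⟩
    exact this.trans rfl
  refine ⟨g, ⟨fun x hx => ?_, hge⟩, ?_⟩
  · have h1 : g (-x) ≤ p C e (-x) := hg_le (-x)
    have h2 : p C e (-x) ≤ 0 := by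
      apply p_le h he
      simpa using hx
    rw [map_neg] at h1
    linarith
  · rw [map_sub, hge] at hgwe
    linarith

theorem nSet_bddBelow (v : V) :
    BddBelow {a : ℝ | 0 < a ∧ a • e - v ∈ C ∧ a • e + v ∈ C} :=
  ⟨0, fun a ha => ha.1.le⟩

theorem one_mem_nSet (h : IsOrderUnitSpace C e) {w : V} (hw : w ∈ C)
    (hew : e - w ∈ C) :
    (1 : ℝ) ∈ {a : ℝ | 0 < a ∧ a • e - w ∈ C ∧ a • e + w ∈ C} := by
  refine ⟨one_pos, ?_, ?_⟩
  · rwa [one_smul]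
  · rw [one_smul]; exact h.add_mem _ (e_mem h) _ hw

theorem ouNorm_le_one (h : IsOrderUnitSpace C e) {w : V} (hw : w ∈ C)
    (hew : e - w ∈ C) : ouNorm C e w ≤ 1 :=
  csInf_le (nSet_bddBelow w) (one_mem_nSet h hw hew)

theorem p_eq_one (h : IsOrderUnitSpace C e) (he : e ≠ 0) {w : V} (hw : w ∈ C)
    (hew : e - w ∈ C) (hn : ouNorm C e w = 1) : p C e w = 1 := by
  have h1 : p C e w ≤ 1 := p_le h he (by rwa [one_smul])
  rcases lt_or_eq_of_le h1 with hlt | heq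
  · exfalso
    have h0 : 0 ≤ p C e w := by
      apply smul_e_nonneg h he
      have := h.add_mem _ (p_spec h he w) _ hw
      rwa [sub_add_cancel] at this
    set a := (p C e w + 1) / 2 with ha
    have ha0 : 0 < a := by rw [ha]; linarith
    have hmem : a ∈ {a : ℝ | 0 < a ∧ a • e - w ∈ C ∧ a • e + w ∈ C} := by
      refine ⟨ha0, ?_, h.add_mem _ (h.smul_mem a ha0.le _ (e_mem h)) _ hw⟩
      have h2 : (a - p C e w) • e ∈ C := h.smul_mem _ (by rw [ha]; linarith) _ (e_mem h)
      have := h.add_mem _ h2 _ (p_spec h he w)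
      rwa [show (a - p C e w) • e + (p C e w • e - w) = a • e - w by module] at this
    have := csInf_le (nSet_bddBelow w) hmem
    rw [← ouNorm] at this
    rw [hn] at this
    rw [ha] at this
    linarith
  · exact heq

theorem ouNorm_eq_one_of_state (h : IsOrderUnitSpace C e) {w : V} (hw : w ∈ C)
    (hew : e - w ∈ C) {f : V →ₗ[ℝ] ℝ} (hf : IsState C e f) (hfw : f w = 1) :
    ouNorm C e w = 1 := by
  apply le_antisymm (ouNorm_le_one h hw hew)
  refine le_csInf ⟨1, one_mem_nSet h hw hew⟩ fun a ha => ?_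
  have := hf.1 _ ha.2.1
  rw [map_sub, map_smul, hf.2, smul_eq_mul, mul_one, hfw] at this
  linarith

end PeriphAux

theorem peripheral_segment_tfae
    {V : Type*} [AddCommGroup V] [Module ℝ V] {C : Set V} {e : V}
    (h : IsOrderUnitSpace C e) {u v : V}
    (hu : Peripheral C e u) (hv : Peripheral C e v) (huv : u ≠ v) :
    ((∃ t : ℝ, 0 < t ∧ t < 1 ∧ Peripheral C e ((1 - t) • u + t • v)) ↔
      ∃ f g : V →ₗ[ℝ] ℝ, IsState C e f ∧ IsState C e g ∧
        f u = 1 ∧ f v = 1 ∧ g u = 0 ∧ g v = 0) ∧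
    ((∃ t : ℝ, 0 < t ∧ t < 1 ∧ Peripheral C e ((1 - t) • u + t • v)) ↔
      ∀ x ∈ segment ℝ u v, Peripheral C e x) := by
  open PeriphAux in
  have he : e ≠ 0 := by
    intro he0
    apply huv
    have hu0 : u = 0 := h.proper u hu.1 (by
      have := hu.2.1; rwa [he0, zero_sub] at this)
    have hv0 : v = 0 := h.proper v hv.1 (by
      have := hv.2.1; rwa [he0, zero_sub] at this)
    rw [hu0, hv0]
  have h12 : (∃ t : ℝ, 0 < t ∧ t < 1 ∧ Peripheral C e ((1 - t) • u + t • v)) →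
      ∃ f g : V →ₗ[ℝ] ℝ, IsState C e f ∧ IsState C e g ∧
        f u = 1 ∧ f v = 1 ∧ g u = 0 ∧ g v = 0 := by
    rintro ⟨t, ht0, ht1, hxC, hexC, hn1, hn2⟩
    set x := (1 - t) • u + t • v with hx
    -- state f with f x = 1
    obtain ⟨f, hf, hfx⟩ := PeriphAux.exists_state h he (PeriphAux.p_eq_one h he hxC hexC hn1)
    have hfu : f u ≤ 1 := by
      have := hf.1 _ hu.2.1
      rw [map_sub, hf.2] at this; linarith
    have hfv : f v ≤ 1 := by
      have := hf.1 _ hv.2.1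
      rw [map_sub, hf.2] at this; linarith
    have hfxc : (1 - t) * f u + t * f v = 1 := by
      rw [hx, map_add, map_smul, map_smul] at hfx
      simpa using hfx
    have hfu1 : f u = 1 := by nlinarith
    have hfv1 : f v = 1 := by nlinarith
    -- state g with g (e - x) = 1
    have hexx : e - (e - x) ∈ C := by rwa [sub_sub_cancel]
    obtain ⟨g, hg, hgx⟩ := PeriphAux.exists_state h he (PeriphAux.p_eq_one h he hexC hexx hn2)
    have hgx0 : g x = 0 := by
      rw [map_sub, hg.2] at hgx; linarith
    have hgu : 0 ≤ g u := hg.1 _ hu.1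
    have hgv : 0 ≤ g v := hg.1 _ hv.1
    have hgxc : (1 - t) * g u + t * g v = 0 := by
      rw [hx, map_add, map_smul, map_smul] at hgx0
      simpa using hgx0
    exact ⟨f, g, hf, hg, hfu1, hfv1, by nlinarith, by nlinarith⟩
  have h23 : (∃ f g : V →ₗ[ℝ] ℝ, IsState C e f ∧ IsState C e g ∧
      f u = 1 ∧ f v = 1 ∧ g u = 0 ∧ g v = 0) →
      ∀ x ∈ segment ℝ u v, Peripheral C e x := by
    rintro ⟨f, g, hf, hg, hfu, hfv, hgu, hgv⟩ x hx
    obtain ⟨a, b, ha, hb, hab, rfl⟩ := hx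
    have hxC : a • u + b • v ∈ C :=
      h.add_mem _ (h.smul_mem a ha _ hu.1) _ (h.smul_mem b hb _ hv.1)
    have hexC : e - (a • u + b • v) ∈ C := by
      have heq : e - (a • u + b • v) = a • (e - u) + b • (e - v) := by
        have h1 : a • (e - u) + b • (e - v) = (a + b) • e - (a • u + b • v) := by module
        rw [h1, hab, one_smul]
      rw [heq]
      exact h.add_mem _ (h.smul_mem a ha _ hu.2.1) _ (h.smul_mem b hb _ hv.2.1)
    have hfx : f (a • u + b • v) = 1 := by
      rw [map_add, map_smul, map_smul, hfu, hfv]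
      simpa using hab
    have hgx : g (e - (a • u + b • v)) = 1 := by
      rw [map_sub, map_add, map_smul, map_smul, hgu, hgv, hg.2]
      simp
    refine ⟨hxC, hexC, PeriphAux.ouNorm_eq_one_of_state h hxC hexC hf hfx, ?_⟩
    have hexx : e - (e - (a • u + b • v)) ∈ C := by rwa [sub_sub_cancel]
    exact PeriphAux.ouNorm_eq_one_of_state h hexC hexx hg hgx
  have h31 : (∀ x ∈ segment ℝ u v, Peripheral C e x) →
      ∃ t : ℝ, 0 < t ∧ t < 1 ∧ Peripheral C e ((1 - t) • u + t • v) := by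
    intro h3
    refine ⟨1/2, by norm_num, by norm_num, h3 _ ⟨1 - (1/2 : ℝ), 1/2, by norm_num,
      by norm_num, by norm_num, rfl⟩⟩
  exact ⟨⟨h12, fun h2 => h31 (h23 h2)⟩, ⟨fun h1 => h23 (h12 h1), h31⟩⟩
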